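/- Assume the relative quality functions satisfy q_j(A) = 1/(n·C(n−1,|A|)) for every j ∈ C and A ⊆ C∖{j}. Then for every component j ∈ C, the Barlow-Proschan index satisfies I_BP^{(j)} = ∑_{A⊆C, j∈A} d(A)/|A|. -/

import Mathlib

open MeasureTheory Finset

/-- Lifetime of the (sub)system on component set `D` with structure function `χ`
(the maximum over the sets `A ⊆ D` with `χ A = 1` of `min_{i ∈ A} T i`). -/
noncomputable def sysLifeOn {Ω : Type*} {n : ℕ} (T : Fin n → Ω → ℝ)
    (D : Finset (Fin n)) (χ : Finset (Fin n) → ℝ) (ω : Ω) : ℝ :=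
  if h : (D.powerset.filter fun A => χ A = 1).Nonempty then
    (D.powerset.filter fun A => χ A = 1).sup' h
      (fun A => if hA : A.Nonempty then A.inf' hA fun i => T i ω else 0)
  else 0

/-- The `k`-th order statistic of the lifetimes `(T i)_{i ∈ M}`. -/
noncomputable def orderStat {Ω : Type*} {n : ℕ} (T : Fin n → Ω → ℝ)
    (M : Finset (Fin n)) (k : ℕ) (ω : Ω) : ℝ :=
  ((M.val.map fun i => T i ω).sort (· ≤ ·)).getD (k - 1) 0

/-- The relative quality function `q_j(A) = Pr(max_{i ∈ C∖A} T_i = T_j < min_{i ∈ A} T_i)`. -/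
noncomputable def relQual {Ω : Type*} [MeasurableSpace Ω] {n : ℕ} (μ : Measure Ω)
    (T : Fin n → Ω → ℝ) (j : Fin n) (A : Finset (Fin n)) : ℝ :=
  (μ {ω | (∀ i ∉ A, T i ω ≤ T j ω) ∧ ∀ i ∈ A, T j ω < T i ω}).toReal

/-- `min_{i ∈ A} T i` (with junk value `0` when `A = ∅`). -/
noncomputable def minLifeOn {Ω : Type*} {n : ℕ} (T : Fin n → Ω → ℝ)
    (A : Finset (Fin n)) (ω : Ω) : ℝ :=
  if h : A.Nonempty then A.inf' h fun i => T i ω else 0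

/-- The signed domination function `d(A) = ∑_{B ⊆ A} (-1)^{|A|-|B|} φ(B)`. -/
noncomputable def signedDom {n : ℕ} (φ : Finset (Fin n) → ℝ) (A : Finset (Fin n)) : ℝ :=
  ∑ B ∈ A.powerset, (-1 : ℝ) ^ (A.card - B.card) * φ B


lemma altSumX : ∀ (N b : ℕ), 1 ≤ b →
    ∑ m ∈ range (N+1), (-1:ℝ)^m * ((N.choose m : ℕ) : ℝ) / ((b:ℝ)+m)
      = (b-1).factorial * N.factorial / (b+N).factorial := by
  intro N
  induction N with
  | zero =>
    intro b hb
    obtain ⟨c, rfl⟩ := Nat.exists_eq_add_of_le hb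
    have : (1+c).factorial = (1+c) * c.factorial := by
      rw [Nat.add_comm 1 c, Nat.factorial_succ]
    simp only [Nat.zero_add, Finset.sum_range_one, Nat.add_zero, this, Nat.add_sub_cancel_left]
    push_cast
    have hc : ((c.factorial : ℝ)) ≠ 0 := by positivity
    have hc2 : (1:ℝ)+c ≠ 0 := by positivity
    field_simp
    simp
  | succ N ih =>
    intro b hb
    have key : ∑ m ∈ range (N+2), (-1:ℝ)^m * (((N+1).choose m : ℕ) : ℝ) / ((b:ℝ)+m)
        = (∑ m ∈ range (N+1), (-1:ℝ)^m * ((N.choose m : ℕ) : ℝ) / ((b:ℝ)+m))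
          - ∑ m ∈ range (N+1), (-1:ℝ)^m * ((N.choose m : ℕ) : ℝ) / (((b+1:ℕ):ℝ)+m) := by
      rw [Finset.sum_range_succ' (fun m => (-1:ℝ)^m * (((N+1).choose m : ℕ) : ℝ) / ((b:ℝ)+m)) (N+1),
          Finset.sum_range_succ' (fun m => (-1:ℝ)^m * ((N.choose m : ℕ) : ℝ) / ((b:ℝ)+m)) N]
      have hsplit : ∀ m, (-1:ℝ)^(m+1) * (((N+1).choose (m+1) : ℕ) : ℝ) / ((b:ℝ)+(m+1))
          = (-1:ℝ)^(m+1) * ((N.choose m : ℕ) : ℝ) / ((b:ℝ)+(m+1))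
            + (-1:ℝ)^(m+1) * ((N.choose (m+1) : ℕ) : ℝ) / ((b:ℝ)+(m+1)) := by
        intro m
        rw [Nat.choose_succ_succ']
        push_cast
        ring
      have e1 : ∑ m ∈ range (N+1), (-1:ℝ)^(m+1) * (((N+1).choose (m+1) : ℕ) : ℝ) / ((b:ℝ)+(m+1))
          = (∑ m ∈ range (N+1), (-1:ℝ)^(m+1) * ((N.choose m : ℕ) : ℝ) / ((b:ℝ)+(m+1)))
            + ∑ m ∈ range (N+1), (-1:ℝ)^(m+1) * ((N.choose (m+1) : ℕ) : ℝ) / ((b:ℝ)+(m+1)) := by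
        rw [← Finset.sum_add_distrib]
        exact Finset.sum_congr rfl fun m _ => hsplit m
      push_cast
      rw [e1]
      have h2 : ∑ m ∈ range (N+1), (-1:ℝ)^(m+1) * ((N.choose (m+1) : ℕ) : ℝ) / ((b:ℝ)+(m+1))
          = ∑ m ∈ range N, (-1:ℝ)^(m+1) * ((N.choose (m+1) : ℕ) : ℝ) / ((b:ℝ)+(m+1)) := by
        rw [Finset.sum_range_succ]
        simp
      have h3 : ∑ m ∈ range (N+1), (-1:ℝ)^(m+1) * ((N.choose m : ℕ) : ℝ) / ((b:ℝ)+(m+1))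
          = - ∑ m ∈ range (N+1), (-1:ℝ)^m * ((N.choose m : ℕ) : ℝ) / (((b+1:ℕ):ℝ)+m) := by
        rw [← Finset.sum_neg_distrib]
        apply Finset.sum_congr rfl
        intro m _
        push_cast
        ring
      rw [h2, h3]
      simp only [Nat.choose_zero_right]
      push_cast
      ring
    rw [key, ih b hb, ih (b+1) (by omega)]
    obtain ⟨c, rfl⟩ := Nat.exists_eq_add_of_le hb
    have hb' : 1 + c - 1 = c := by omega
    have hb2 : 1 + c + 1 - 1 = 1 + c := by omega
    rw [hb', hb2]
    have hfac1 : ((1+c+(N+1)).factorial : ℝ) = ((1:ℝ)+c+N+1) * ((1+c+N).factorial : ℝ) := by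
      have : 1+c+(N+1) = (1+c+N)+1 := by ring
      rw [this, Nat.factorial_succ]; push_cast; ring
    have hfac3 : (((1+c).factorial : ℕ) : ℝ) = ((1:ℝ)+c) * (c.factorial : ℝ) := by
      have : (1+c).factorial = (1+c) * c.factorial := by
        rw [Nat.add_comm 1 c, Nat.factorial_succ]
      rw [this]; push_cast; ring
    have hfac4 : (((1+c+1)+N).factorial : ℝ) = ((1:ℝ)+c+N+1) * ((1+c+N).factorial : ℝ) := by
      have : (1+c+1)+N = (1+c+N)+1 := by omega
      rw [this, Nat.factorial_succ]; push_cast; ring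
    have hfac5 : ((N+1).factorial : ℝ) = ((N:ℝ)+1) * (N.factorial : ℝ) := by
      rw [Nat.factorial_succ]; push_cast; ring
    rw [hfac1, hfac4, hfac5, hfac3]
    have h1 : ((1+c+N).factorial : ℝ) ≠ 0 := by positivity
    have h2 : ((1:ℝ)+c+N+1) ≠ 0 := by positivity
    field_simp
    ring

lemma coeffBX {n : ℕ} (j : Fin n) (B : Finset (Fin n)) :
    ∑ S ∈ Finset.univ.powerset.filter (fun S => insert j B ⊆ S),
        (-1:ℝ)^(S.card - B.card) / (S.card : ℝ)
      = if j ∈ B then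
          ((B.card-1).factorial : ℝ) * ((n - B.card).factorial : ℝ) / (n.factorial : ℝ)
        else -(((B.card.factorial : ℝ) * ((n - B.card - 1).factorial : ℝ)) / (n.factorial : ℝ)) := by
  classical
  set K := insert j B with hK
  set k := K.card with hk
  have hKcompl : Kᶜ.card = n - k := by
    rw [Finset.card_compl, Fintype.card_fin]
  -- reindex over subsets of Kᶜ
  have step1 : ∑ S ∈ Finset.univ.powerset.filter (fun S => K ⊆ S),
        (-1:ℝ)^(S.card - B.card) / (S.card : ℝ)
      = ∑ E ∈ Kᶜ.powerset, (-1:ℝ)^(k + E.card - B.card) / ((k : ℝ) + E.card) := by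
    apply Finset.sum_bij' (i := fun S _ => S \ K) (j := fun E _ => K ∪ E)
    · intro S hS
      rw [Finset.mem_powerset]
      intro x hx
      rw [Finset.mem_compl]
      exact (Finset.mem_sdiff.1 hx).2
    · intro E hE
      rw [Finset.mem_filter]
      exact ⟨Finset.mem_powerset.2 (Finset.subset_univ _), Finset.subset_union_left⟩
    · intro S hS
      exact Finset.union_sdiff_of_subset (Finset.mem_filter.1 hS).2
    · intro E hE
      have hdisj : Disjoint K E := by
        rw [Finset.disjoint_left]
        intro x hxK hxE
        exact (Finset.mem_compl.1 (Finset.mem_powerset.1 hE hxE)) hxK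
      rw [Finset.union_sdiff_cancel_left hdisj]
    · intro S hS
      have hsub : K ⊆ S := (Finset.mem_filter.1 hS).2
      have hcard : S.card = k + (S \ K).card := by
        rw [Finset.card_sdiff_of_subset hsub]
        have := Finset.card_le_card hsub
        omega
      rw [← hcard]
      push_cast [hcard]
      norm_num
  rw [step1, Finset.sum_powerset, hKcompl]
  by_cases hjB : j ∈ B
  · -- K = B, k = B.card
    have hKB : K = B := Finset.insert_eq_self.2 hjB
    have hkb : k = B.card := by rw [hk, hKB]
    have hb1 : 1 ≤ B.card := Finset.card_pos.2 ⟨j, hjB⟩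
    have hbn : B.card ≤ n := le_trans (Finset.card_le_univ B) (by simp)
    rw [if_pos hjB]
    have : ∀ m ∈ range (n - k + 1),
        ∑ E ∈ Finset.powersetCard m Kᶜ, (-1:ℝ)^(k + E.card - B.card) / ((k : ℝ) + E.card)
          = (-1:ℝ)^m * (((n-B.card).choose m : ℕ) : ℝ) / ((B.card:ℝ)+m) := by
      intro m _
      have : ∀ E ∈ Finset.powersetCard m Kᶜ,
          (-1:ℝ)^(k + E.card - B.card) / ((k : ℝ) + E.card)
            = (-1:ℝ)^m / ((B.card:ℝ)+m) := by
        intro E hE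
        have hEc : E.card = m := (Finset.mem_powersetCard.1 hE).2
        rw [hEc, hkb, Nat.add_sub_cancel_left]
      rw [Finset.sum_congr rfl this, Finset.sum_const, Finset.card_powersetCard, hKcompl,
        hkb, nsmul_eq_mul]
      ring
    rw [Finset.sum_congr rfl this, hkb, altSumX (n - B.card) B.card hb1]
    have h2 : B.card + (n - B.card) = n := by omega
    rw [h2]
  · -- k = B.card + 1
    have hkb : k = B.card + 1 := by rw [hk, hK, Finset.card_insert_of_notMem hjB]
    have hbn : B.card + 1 ≤ n := by
      rw [← hkb]; exact le_trans (Finset.card_le_univ K) (by simp)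
    rw [if_neg hjB]
    have : ∀ m ∈ range (n - k + 1),
        ∑ E ∈ Finset.powersetCard m Kᶜ, (-1:ℝ)^(k + E.card - B.card) / ((k : ℝ) + E.card)
          = -((-1:ℝ)^m * (((n-B.card-1).choose m : ℕ) : ℝ) / (((B.card+1):ℝ)+m)) := by
      intro m _
      have : ∀ E ∈ Finset.powersetCard m Kᶜ,
          (-1:ℝ)^(k + E.card - B.card) / ((k : ℝ) + E.card)
            = -((-1:ℝ)^m / (((B.card+1):ℝ)+m)) := by
        intro E hE
        have hEc : E.card = m := (Finset.mem_powersetCard.1 hE).2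
        rw [hEc]
        have hexp : k + m - B.card = m + 1 := by omega
        rw [hexp, hkb, pow_succ]
        push_cast
        ring
      rw [Finset.sum_congr rfl this, Finset.sum_const, Finset.card_powersetCard, hKcompl,
        hkb, nsmul_eq_mul]
      have : n - (B.card + 1) = n - B.card - 1 := by omega
      rw [this]
      push_cast
      ring
    rw [Finset.sum_congr rfl this, Finset.sum_neg_distrib]
    have hcast : ∀ m, (((B.card+1):ℝ)+(m:ℝ)) = (((B.card+1:ℕ)):ℝ)+(m:ℝ) := by
      intro m; push_cast; ring
    have := altSumX (n - B.card - 1) (B.card + 1) (by omega)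
    have hrw : ∑ m ∈ range (n - k + 1), (-1:ℝ)^m * (((n-B.card-1).choose m : ℕ) : ℝ) / (((B.card+1):ℝ)+m)
        = ∑ m ∈ range ((n - B.card - 1)+1), (-1:ℝ)^m * (((n-B.card-1).choose m : ℕ) : ℝ) / ((((B.card+1:ℕ)):ℝ)+m) := by
      apply Finset.sum_congr
      · congr 1; omega
      · intro m _; rw [hcast m]
    rw [hrw, this]
    have h1 : B.card + 1 - 1 = B.card := by omega
    have h2 : B.card + 1 + (n - B.card - 1) = n := by omega
    rw [h1, h2]

lemma fact1X {n b : ℕ} (hb : 1 ≤ b) (hbn : b ≤ n) :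
    (1:ℝ)/((n:ℝ)*(((n-1).choose (b-1) : ℕ):ℝ))
      = ((b-1).factorial : ℝ) * ((n - b).factorial : ℝ) / (n.factorial : ℝ) := by
  have hc := Nat.choose_mul_factorial_mul_factorial (show b-1 ≤ n-1 by omega)
  have he : (n-1) - (b-1) = n - b := by omega
  rw [he] at hc
  have hnat : n.factorial = n * ((n-1).choose (b-1) * (b-1).factorial * (n-b).factorial) := by
    rw [hc, Nat.mul_factorial_pred (by omega)]
  have hreal : (n.factorial : ℝ)
      = (n:ℝ) * (((n-1).choose (b-1) : ℕ):ℝ) * ((b-1).factorial : ℝ) * ((n-b).factorial : ℝ) := by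
    exact_mod_cast hnat.trans (by ring)
  have hcp : 0 < ((n-1).choose (b-1)) := Nat.choose_pos (by omega)
  have h1 : ((n:ℝ)*(((n-1).choose (b-1) : ℕ):ℝ)) ≠ 0 := by
    apply mul_ne_zero
    · have : (0:ℝ) < n := by exact_mod_cast (by omega : 0 < n)
      linarith
    · have : (0:ℝ) < (((n-1).choose (b-1) : ℕ):ℝ) := by exact_mod_cast hcp
      linarith
  have h2 : (n.factorial : ℝ) ≠ 0 := by positivity
  rw [div_eq_div_iff h1 h2, hreal]
  ring

lemma fact2X {n b : ℕ} (hn : 1 ≤ n) (hbn : b ≤ n - 1) :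
    (1:ℝ)/((n:ℝ)*(((n-1).choose b : ℕ):ℝ))
      = (b.factorial : ℝ) * ((n - b - 1).factorial : ℝ) / (n.factorial : ℝ) := by
  have hc := Nat.choose_mul_factorial_mul_factorial (show b ≤ n-1 from hbn)
  have he : (n-1) - b = n - b - 1 := by omega
  rw [he] at hc
  have hnat : n.factorial = n * ((n-1).choose b * b.factorial * (n-b-1).factorial) := by
    rw [hc, Nat.mul_factorial_pred (by omega)]
  have hreal : (n.factorial : ℝ)
      = (n:ℝ) * (((n-1).choose b : ℕ):ℝ) * (b.factorial : ℝ) * ((n-b-1).factorial : ℝ) := by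
    exact_mod_cast hnat.trans (by ring)
  have hcp : 0 < ((n-1).choose b) := Nat.choose_pos hbn
  have h1 : ((n:ℝ)*(((n-1).choose b : ℕ):ℝ)) ≠ 0 := by
    apply mul_ne_zero
    · have : (0:ℝ) < n := by exact_mod_cast (by omega : 0 < n)
      linarith
    · have : (0:ℝ) < (((n-1).choose b : ℕ):ℝ) := by exact_mod_cast hcp
      linarith
  have h2 : (n.factorial : ℝ) ≠ 0 := by positivity
  rw [div_eq_div_iff h1 h2, hreal]
  ring

lemma combX {n : ℕ} (φ : Finset (Fin n) → ℝ) (j : Fin n) :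
    ∑ A ∈ (Finset.univ.erase j).powerset,
        (φ (insert j A) - φ A) * ((1:ℝ) / ((n:ℝ) * (((n-1).choose A.card : ℕ) : ℝ)))
      = ∑ S ∈ Finset.univ.powerset.filter (fun S => j ∈ S), signedDom φ S / (S.card : ℝ) := by
  classical
  have hn : 1 ≤ n := Fin.pos j
  set q : ℕ → ℝ := fun a => (1:ℝ) / ((n:ℝ) * (((n-1).choose a : ℕ) : ℝ)) with hq
  -- RHS rewrite
  have hRHS : ∑ S ∈ Finset.univ.powerset.filter (fun S => j ∈ S), signedDom φ S / (S.card : ℝ)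
      = ∑ B ∈ Finset.univ.powerset, φ B *
          ∑ S ∈ Finset.univ.powerset.filter (fun S => insert j B ⊆ S),
            (-1:ℝ)^(S.card - B.card) / (S.card : ℝ) := by
    have e1 : ∀ S ∈ Finset.univ.powerset.filter (fun S => j ∈ S),
        signedDom φ S / (S.card : ℝ)
          = ∑ B ∈ S.powerset, φ B * ((-1:ℝ)^(S.card - B.card) / (S.card : ℝ)) := by
      intro S _
      rw [signedDom, Finset.sum_div]
      exact Finset.sum_congr rfl fun B _ => by ring
    rw [Finset.sum_congr rfl e1]
    rw [Finset.sum_comm' (t' := Finset.univ.powerset)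
      (s' := fun B => Finset.univ.powerset.filter (fun S => insert j B ⊆ S))
      (by
        intro S B
        simp only [Finset.mem_filter, Finset.mem_powerset, Finset.insert_subset_iff]
        constructor
        · rintro ⟨⟨_, hjS⟩, hBS⟩
          exact ⟨⟨Finset.subset_univ _, hjS, hBS⟩, Finset.subset_univ _⟩
        · rintro ⟨⟨_, hjS, hBS⟩, _⟩
          exact ⟨⟨Finset.subset_univ _, hjS⟩, hBS⟩)]
    exact Finset.sum_congr rfl fun B _ => by rw [Finset.mul_sum]
  rw [hRHS]
  -- LHS rewrite
  have hLHS : ∑ A ∈ (Finset.univ.erase j).powerset,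
        (φ (insert j A) - φ A) * q A.card
      = ∑ B ∈ Finset.univ.powerset,
          φ B * (if j ∈ B then q (B.card - 1) else -(q B.card)) := by
    have hsplit : ∀ A ∈ (Finset.univ.erase j).powerset,
        (φ (insert j A) - φ A) * q A.card
          = φ (insert j A) * q A.card - φ A * q A.card := fun A _ => by ring
    rw [Finset.sum_congr rfl hsplit, Finset.sum_sub_distrib]
    have hP : (Finset.univ.erase j).powerset
        = Finset.univ.powerset.filter (fun A => j ∉ A) := by
      ext A
      simp [Finset.subset_erase]
    have hS1 : ∑ A ∈ (Finset.univ.erase j).powerset, φ (insert j A) * q A.card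
        = ∑ B ∈ Finset.univ.powerset.filter (fun B => j ∈ B), φ B * q (B.card - 1) := by
      refine Finset.sum_nbij' (fun A => insert j A) (fun S => S.erase j) ?_ ?_ ?_ ?_ ?_
      · intro A hA
        simp
      · intro S hS
        rw [Finset.mem_powerset]
        exact Finset.erase_subset_erase j (Finset.subset_univ S)
      · intro A hA
        have hjA : j ∉ A := (Finset.subset_erase.1 (Finset.mem_powerset.1 hA)).2
        exact Finset.erase_insert hjA
      · intro S hS
        exact Finset.insert_erase (Finset.mem_filter.1 hS).2
      · intro A hA
        have hjA : j ∉ A := (Finset.subset_erase.1 (Finset.mem_powerset.1 hA)).2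
        rw [Finset.card_insert_of_notMem hjA, Nat.add_sub_cancel]
    rw [hS1, hP]
    rw [← Finset.sum_filter_add_sum_filter_not Finset.univ.powerset (fun B => j ∈ B)
      (fun B => φ B * (if j ∈ B then q (B.card - 1) else -(q B.card)))]
    have e2 : ∑ x ∈ Finset.univ.powerset.filter (fun B => j ∈ B),
        φ x * (if j ∈ x then q (x.card - 1) else -(q x.card))
        = ∑ x ∈ Finset.univ.powerset.filter (fun B => j ∈ B), φ x * q (x.card - 1) := by
      apply Finset.sum_congr rfl
      intro x hx
      rw [if_pos (Finset.mem_filter.1 hx).2]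
    have e3 : ∑ x ∈ Finset.univ.powerset.filter (fun B => ¬ j ∈ B),
        φ x * (if j ∈ x then q (x.card - 1) else -(q x.card))
        = - ∑ x ∈ Finset.univ.powerset.filter (fun B => ¬ j ∈ B), φ x * q x.card := by
      rw [← Finset.sum_neg_distrib]
      apply Finset.sum_congr rfl
      intro x hx
      rw [if_neg (Finset.mem_filter.1 hx).2]
      ring
    rw [e2, e3]
    ring
  rw [hq] at hLHS
  rw [hLHS]
  -- termwise equality
  apply Finset.sum_congr rfl
  intro B hB
  rw [coeffBX j B]
  by_cases hjB : j ∈ B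
  · rw [if_pos hjB, if_pos hjB]
    have hb : 1 ≤ B.card := Finset.card_pos.2 ⟨j, hjB⟩
    have hbn : B.card ≤ n := le_trans (Finset.card_le_univ B) (by simp)
    beta_reduce
    rw [fact1X hb hbn]
  · rw [if_neg hjB, if_neg hjB]
    have hbn : B.card ≤ n - 1 := by
      have : B ⊆ Finset.univ.erase j := Finset.subset_erase.2 ⟨Finset.subset_univ _, hjB⟩
      have h := Finset.card_le_card this
      rwa [Finset.card_erase_of_mem (Finset.mem_univ j), Finset.card_univ, Fintype.card_fin] at h
    beta_reduce
    rw [fact2X hn hbn]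

lemma pivotal_iffX {Ω : Type*} {n : ℕ} (T : Fin n → Ω → ℝ) (φ : Finset (Fin n) → ℝ)
    (hφ01 : ∀ A, φ A = 0 ∨ φ A = 1)
    (hφmono : ∀ A B : Finset (Fin n), A ⊆ B → φ A ≤ φ B)
    (hφempty : φ ∅ = 0) (hφfull : φ Finset.univ = 1)
    (j : Fin n) (ω : Ω)
    (hd : ∀ i i' : Fin n, i ≠ i' → T i ω ≠ T i' ω)
    (A : Finset (Fin n)) (hjA : j ∉ A)
    (h1 : ∀ i ∉ A, T i ω ≤ T j ω) (h2 : ∀ i ∈ A, T j ω < T i ω) :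
    sysLifeOn T Finset.univ φ ω = T j ω ↔ (φ (insert j A) = 1 ∧ φ A = 0) := by
  have hne : (Finset.univ.powerset.filter fun B => φ B = 1).Nonempty :=
    ⟨Finset.univ, by simp [hφfull]⟩
  have hBne : ∀ B ∈ Finset.univ.powerset.filter fun B => φ B = 1, B.Nonempty := by
    intro B hB
    rcases Finset.eq_empty_or_nonempty B with rfl | h
    · exfalso; have := (Finset.mem_filter.1 hB).2; rw [hφempty] at this; norm_num at this
    · exact h
  have hsys : sysLifeOn T Finset.univ φ ω
      = (Finset.univ.powerset.filter fun B => φ B = 1).sup' hne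
        (fun B => if hB : B.Nonempty then B.inf' hB fun i => T i ω else 0) := by
    rw [sysLifeOn, dif_pos hne]
  -- strict version of h1
  have h1' : ∀ i ∉ A, i ≠ j → T i ω < T j ω := fun i hi hij =>
    lt_of_le_of_ne (h1 i hi) (hd i j hij)
  constructor
  · intro heq
    rw [hsys] at heq
    obtain ⟨B, hBmem, hBeq⟩ := Finset.exists_mem_eq_sup' hne
      (fun B => if hB : B.Nonempty then B.inf' hB fun i => T i ω else 0)
    have hBn : B.Nonempty := hBne B hBmem
    rw [dif_pos hBn] at hBeq
    have hinf : B.inf' hBn (fun i => T i ω) = T j ω := by rw [← hBeq, ← heq]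
    have hφB : φ B = 1 := (Finset.mem_filter.1 hBmem).2
    -- every i ∈ B satisfies T j ω ≤ T i ω
    have hge : ∀ i ∈ B, T j ω ≤ T i ω := by
      intro i hi
      calc T j ω = B.inf' hBn (fun i => T i ω) := hinf.symm
        _ ≤ T i ω := Finset.inf'_le _ hi
    have hBsub : B ⊆ insert j A := by
      intro i hi
      by_contra hcon
      rw [Finset.mem_insert] at hcon
      push_neg at hcon
      exact absurd (hge i hi) (not_le.2 (h1' i hcon.2 hcon.1))
    have hins : φ (insert j A) = 1 := by
      rcases hφ01 (insert j A) with h | h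
      · exfalso
        have := hφmono B (insert j A) hBsub
        rw [hφB, h] at this; linarith
      · exact h
    refine ⟨hins, ?_⟩
    rcases hφ01 A with h | h
    · exact h
    · exfalso
      have hAn : A.Nonempty := by
        rcases Finset.eq_empty_or_nonempty A with rfl | hx
        · rw [hφempty] at h; norm_num at h
        · exact hx
      have hAmem : A ∈ Finset.univ.powerset.filter fun B => φ B = 1 := by
        simp [h]
      have hle := Finset.le_sup' (f := fun B => if hB : B.Nonempty then B.inf' hB fun i => T i ω else 0) hAmem
      rw [dif_pos hAn] at hle
      have : T j ω < A.inf' hAn fun i => T i ω := by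
        rw [Finset.lt_inf'_iff]
        exact fun i hi => h2 i hi
      rw [heq] at hle
      linarith
  · rintro ⟨hins, hA0⟩
    rw [hsys]
    apply le_antisymm
    · apply Finset.sup'_le
      intro B hB
      have hBn := hBne B hB
      rw [dif_pos hBn]
      have hφB : φ B = 1 := (Finset.mem_filter.1 hB).2
      have : ¬ B ⊆ A := by
        intro hsub
        have := hφmono B A hsub
        rw [hφB, hA0] at this; linarith
      obtain ⟨i, hiB, hiA⟩ := Finset.not_subset.1 this
      calc B.inf' hBn (fun i => T i ω) ≤ T i ω := Finset.inf'_le _ hiB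
        _ ≤ T j ω := h1 i hiA
    · have hmem : insert j A ∈ Finset.univ.powerset.filter fun B => φ B = 1 := by
        simp [hins]
      have hn : (insert j A).Nonempty := Finset.insert_nonempty _ _
      have hle := Finset.le_sup' (f := fun B => if hB : B.Nonempty then B.inf' hB fun i => T i ω else 0) hmem
      rw [dif_pos hn] at hle
      refine le_trans ?_ hle
      apply Finset.le_inf'
      intro i hi
      rcases Finset.mem_insert.1 hi with rfl | hi
      · exact le_refl _
      · exact le_of_lt (h2 i hi)

theorem stmt_13 {Ω : Type*} [MeasurableSpace Ω] (μ : Measure Ω) [IsProbabilityMeasure μ]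
    {n : ℕ} (T : Fin n → Ω → ℝ) (hTmeas : ∀ i, Measurable (T i))
    (hTnonneg : ∀ i ω, 0 ≤ T i ω)
    (hties : ∀ i j : Fin n, i ≠ j → μ {ω | T i ω = T j ω} = 0)
    (φ : Finset (Fin n) → ℝ)
    (hφ01 : ∀ A, φ A = 0 ∨ φ A = 1)
    (hφmono : ∀ A B : Finset (Fin n), A ⊆ B → φ A ≤ φ B)
    (hφempty : φ ∅ = 0) (hφfull : φ Finset.univ = 1)
    (hq : ∀ (j : Fin n) (A : Finset (Fin n)), j ∉ A →
      relQual μ T j A = 1 / ((n : ℝ) * ((n - 1).choose A.card : ℕ)))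
    (j : Fin n) :
    (μ {ω | sysLifeOn T Finset.univ φ ω = T j ω}).toReal =
      ∑ A ∈ (Finset.univ : Finset (Fin n)).powerset.filter (fun A => j ∈ A),
        signedDom φ A / (A.card : ℝ) := by
  classical
  set Ev : Finset (Fin n) → Set Ω := fun A =>
    {ω | (∀ i ∉ A, T i ω ≤ T j ω) ∧ ∀ i ∈ A, T j ω < T i ω} with hEv
  set Good : Finset (Finset (Fin n)) :=
    ((Finset.univ.erase j).powerset).filter (fun A => φ (insert j A) = 1 ∧ φ A = 0) with hGood
  set Z : Set Ω := ⋃ (i : Fin n), ⋃ (i' : Fin n), ⋃ (_ : i ≠ i'), {ω | T i ω = T i' ω} with hZ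
  have hZ0 : μ Z = 0 := by
    rw [hZ]
    refine measure_iUnion_null fun i => measure_iUnion_null fun i' =>
      measure_iUnion_null fun h => hties i i' h
  have hae : ∀ᵐ ω ∂μ, ω ∉ Z := measure_eq_zero_iff_ae_notMem.1 hZ0
  have hdist : ∀ ω, ω ∉ Z → ∀ i i' : Fin n, i ≠ i' → T i ω ≠ T i' ω := by
    intro ω hω i i' hne heq
    exact hω (Set.mem_iUnion.2 ⟨i, Set.mem_iUnion.2 ⟨i', Set.mem_iUnion.2 ⟨hne, heq⟩⟩⟩)
  have hGoodNJ : ∀ A ∈ Good, j ∉ A := by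
    intro A hA
    rw [hGood] at hA
    exact (Finset.subset_erase.1 (Finset.mem_powerset.1 (Finset.mem_filter.1 hA).1)).2
  have hsetae : {ω | sysLifeOn T Finset.univ φ ω = T j ω} =ᵐ[μ] ⋃ A ∈ Good, Ev A := by
    rw [Filter.eventuallyEq_set]
    filter_upwards [hae] with ω hω
    have hd := hdist ω hω
    constructor
    · intro hsys
      set A := Finset.univ.filter (fun i => T j ω < T i ω) with hA
      have hjA : j ∉ A := by simp [hA]
      have h1 : ∀ i ∉ A, T i ω ≤ T j ω := by
        intro i hi
        simp only [hA, Finset.mem_filter, Finset.mem_univ, true_and, not_lt] at hi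
        exact hi
      have h2 : ∀ i ∈ A, T j ω < T i ω := by
        intro i hi
        simp only [hA, Finset.mem_filter, Finset.mem_univ, true_and] at hi
        exact hi
      have hpiv := (pivotal_iffX T φ hφ01 hφmono hφempty hφfull j ω hd A hjA h1 h2).1 hsys
      have hAG : A ∈ Good := by
        rw [hGood]
        simp only [Finset.mem_filter, Finset.mem_powerset]
        exact ⟨Finset.subset_erase.2 ⟨Finset.subset_univ _, hjA⟩, hpiv⟩
      exact Set.mem_biUnion hAG ⟨h1, h2⟩
    · intro hmem
      obtain ⟨A, hAG, hωA⟩ := Set.mem_iUnion₂.1 hmem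
      have hjA : j ∉ A := hGoodNJ A hAG
      have hpiv : φ (insert j A) = 1 ∧ φ A = 0 := by
        rw [hGood] at hAG
        exact (Finset.mem_filter.1 hAG).2
      exact (pivotal_iffX T φ hφ01 hφmono hφempty hφfull j ω hd A hjA hωA.1 hωA.2).2 hpiv
  have hmeasEv : ∀ A, MeasurableSet (Ev A) := by
    intro A
    have heq : Ev A = (⋂ (i : Fin n), ⋂ (_ : i ∉ A), {ω | T i ω ≤ T j ω})
        ∩ ⋂ (i : Fin n), ⋂ (_ : i ∈ A), {ω | T j ω < T i ω} := by
      ext ω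
      simp [hEv, Set.mem_iInter, Set.mem_setOf_eq]
    rw [heq]
    exact (MeasurableSet.iInter fun i => MeasurableSet.iInter fun _ =>
        measurableSet_le (hTmeas i) (hTmeas j)).inter
      (MeasurableSet.iInter fun i => MeasurableSet.iInter fun _ =>
        measurableSet_lt (hTmeas j) (hTmeas i))
  have hdisj : (↑Good : Set (Finset (Fin n))).PairwiseDisjoint Ev := by
    intro A hA B hB hAB
    rw [Function.onFun, Set.disjoint_left]
    intro ω hωA hωB
    apply hAB
    apply Finset.ext
    intro i
    constructor
    · intro hi
      by_contra hiB
      exact absurd (hωA.2 i hi) (not_lt.2 (hωB.1 i hiB))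
    · intro hi
      by_contra hiA
      exact absurd (hωB.2 i hi) (not_lt.2 (hωA.1 i hiA))
  have hμ : μ {ω | sysLifeOn T Finset.univ φ ω = T j ω} = ∑ A ∈ Good, μ (Ev A) := by
    rw [measure_congr hsetae, measure_biUnion_finset hdisj (fun A _ => hmeasEv A)]
  rw [hμ, ENNReal.toReal_sum (fun A _ => measure_ne_top μ _)]
  have hval : ∀ A ∈ Good, (μ (Ev A)).toReal
      = 1 / ((n:ℝ) * (((n-1).choose A.card : ℕ):ℝ)) := by
    intro A hA
    have := hq j A (hGoodNJ A hA)
    rw [relQual] at this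
    exact this
  rw [Finset.sum_congr rfl hval, ← combX φ j, hGood, Finset.sum_filter]
  apply Finset.sum_congr rfl
  intro A hA
  by_cases hpiv : φ (insert j A) = 1 ∧ φ A = 0
  · rw [if_pos hpiv, hpiv.1, hpiv.2]
    ring
  · rw [if_neg hpiv]
    have hmono := hφmono A (insert j A) (Finset.subset_insert j A)
    have : φ (insert j A) - φ A = 0 := by
      rcases hφ01 (insert j A) with h1 | h1 <;> rcases hφ01 A with h2 | h2
      · rw [h1, h2]; ring
      · rw [h1, h2] at hmono; linarith
      · exact absurd ⟨h1, h2⟩ hpiv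
      · rw [h1, h2]; ring
    rw [this]
    ring
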